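/- For every real p > 1, the integral ∫₀^{π/2} dσ/(1 + cos²σ · F_p(σ)) equals (π/2)(1 − √((p−1)/(2p))), where F_p(σ) = ((8p−4) cos²σ + (5p−7) sin²σ)/(4 cos²σ + (p−1) sin²σ). -/

import Mathlib

open Real

noncomputable def Fp (p σ : ℝ) : ℝ :=
  ((8 * p - 4) * cos σ ^ 2 + (5 * p - 7) * sin σ ^ 2) /
    (4 * cos σ ^ 2 + (p - 1) * sin σ ^ 2)

lemma aux_div (A B C : ℝ) (hB : B ≠ 0) (h : B ^ 2 + A ^ 2 ≠ 0) :
    1 / (1 + (A / B) ^ 2) * (C / B ^ 2) = C / (B ^ 2 + A ^ 2) := by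
  field_simp

set_option maxHeartbeats 2000000 in
theorem stmt_6 (p : ℝ) (hp : 1 < p) :
    ∫ σ in (0 : ℝ)..(π / 2), 1 / (1 + cos σ ^ 2 * Fp p σ) =
      π / 2 * (1 - Real.sqrt ((p - 1) / (2 * p))) := by
  have hp0 : (0:ℝ) < p := by linarith
  set a : ℝ := Real.sqrt ((p - 1) / (2 * p)) with ha_def
  have ha2 : a ^ 2 = (p - 1) / (2 * p) :=
    Real.sq_sqrt (div_nonneg (by linarith) (by linarith))
  have ha0 : 0 < a := Real.sqrt_pos.mpr (div_pos (by linarith) (by linarith))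
  have ha1 : a < 1 := by
    have h : a ^ 2 < 1 := by
      rw [ha2, div_lt_one (by linarith)]; linarith
    nlinarith [h, ha0]
  have h2a : (0:ℝ) < 1 - 2 * a ^ 2 := by
    rw [ha2]
    have : (p - 1) / (2 * p) < 1 / 2 := by
      rw [div_lt_div_iff₀ (by linarith) (by norm_num)]; linarith
    linarith
  have hP : p = 1 / (1 - 2 * a ^ 2) := by
    rw [ha2]
    field_simp
    ring
  set H : ℝ → ℝ := fun x => (1 - a) * x - Real.arctan (sin x * cos x / (1 + cos x ^ 2))
      - a * Real.arctan ((a - 1) * (sin x * cos x) / (cos x ^ 2 + a * sin x ^ 2)) with hHdef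
  have hpos1 : ∀ x : ℝ, (0:ℝ) < 1 + cos x ^ 2 := fun x => by positivity
  have hsin1 : ∀ x : ℝ, sin x ^ 2 = 1 - cos x ^ 2 := by
    intro x; nlinarith [sin_sq_add_cos_sq x]
  have hcos1 : ∀ x : ℝ, cos x ^ 2 ≤ 1 := by
    intro x; nlinarith [sin_sq_add_cos_sq x, sq_nonneg (sin x)]
  have hpos2 : ∀ x : ℝ, (0:ℝ) < cos x ^ 2 + a * sin x ^ 2 := by
    intro x
    rw [hsin1 x]
    nlinarith [sq_nonneg (cos x), mul_nonneg ha0.le (sub_nonneg.mpr (hcos1 x))]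
  have hFden : ∀ x : ℝ, (0:ℝ) < 4 * cos x ^ 2 + (p - 1) * sin x ^ 2 := by
    intro x
    rw [hsin1 x]
    nlinarith [sq_nonneg (cos x),
      mul_nonneg (by linarith : (0:ℝ) ≤ p - 1) (sub_nonneg.mpr (hcos1 x)),
      mul_nonneg (by linarith : (0:ℝ) ≤ p - 1) (sq_nonneg (cos x))]
  have hD : ∀ x : ℝ, (0:ℝ) < 1 + cos x ^ 2 * Fp p x := by
    intro x
    have hB := hFden x
    have h1 : 1 + cos x ^ 2 * Fp p x =
        ((4 * cos x ^ 2 + (p - 1) * sin x ^ 2) +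
          cos x ^ 2 * ((8 * p - 4) * cos x ^ 2 + (5 * p - 7) * sin x ^ 2)) /
          (4 * cos x ^ 2 + (p - 1) * sin x ^ 2) := by
      rw [Fp, add_div (4 * cos x ^ 2 + (p - 1) * sin x ^ 2), div_self (ne_of_gt hB), mul_div_assoc]
    rw [h1]
    apply div_pos _ hB
    rw [hsin1 x]
    nlinarith [sq_nonneg (cos x), sq_nonneg (cos x ^ 2)]
  have hderiv : ∀ x : ℝ, HasDerivAt H (1 / (1 + cos x ^ 2 * Fp p x)) x := by
    intro x
    have hc := Real.hasDerivAt_cos x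
    have hs := Real.hasDerivAt_sin x
    have hsc : HasDerivAt (fun y => sin y * cos y) (cos x ^ 2 - sin x ^ 2) x := by
      have h := hs.mul hc
      exact h.congr_deriv (by ring)
    have hc2 : HasDerivAt (fun y => (1:ℝ) + cos y ^ 2) (-(2 * sin x * cos x)) x := by
      have h := (hc.pow 2).const_add 1
      exact h.congr_deriv (by ring)
    have hden2 : HasDerivAt (fun y => cos y ^ 2 + a * sin y ^ 2)
        (2 * sin x * cos x * (a - 1)) x := by
      have h := (hc.pow 2).add ((hs.pow 2).const_mul a)
      exact h.congr_deriv (by ring)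
    have hg1 : HasDerivAt (fun y => sin y * cos y / (1 + cos y ^ 2))
        (((cos x ^ 2 - sin x ^ 2) * (1 + cos x ^ 2) + 2 * (sin x ^ 2 * cos x ^ 2)) /
          (1 + cos x ^ 2) ^ 2) x := by
      have h := hsc.div hc2 (ne_of_gt (hpos1 x))
      exact h.congr_deriv (by ring)
    have hnum2 : HasDerivAt (fun y => (a - 1) * (sin y * cos y))
        ((a - 1) * (cos x ^ 2 - sin x ^ 2)) x := hsc.const_mul (a - 1)
    have hg2 : HasDerivAt (fun y => (a - 1) * (sin y * cos y) / (cos y ^ 2 + a * sin y ^ 2))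
        (((a - 1) * (cos x ^ 2 - sin x ^ 2) * (cos x ^ 2 + a * sin x ^ 2)
          - 2 * (a - 1) ^ 2 * (sin x ^ 2 * cos x ^ 2)) / (cos x ^ 2 + a * sin x ^ 2) ^ 2) x := by
      have h := hnum2.div hden2 (ne_of_gt (hpos2 x))
      exact h.congr_deriv (by ring)
    have hA1 := (Real.hasDerivAt_arctan (sin x * cos x / (1 + cos x ^ 2))).comp x hg1
    have hA2 := (Real.hasDerivAt_arctan
      ((a - 1) * (sin x * cos x) / (cos x ^ 2 + a * sin x ^ 2))).comp x hg2
    have hlin : HasDerivAt (fun y : ℝ => (1 - a) * y) (1 - a) x := by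
      have h := (hasDerivAt_id x).const_mul (1 - a)
      exact h.congr_deriv (by ring)
    have hH' := (hlin.sub hA1).sub (hA2.const_mul a)
    refine hH'.congr_deriv (Eq.symm ?_)
    have hs1 : sin x ^ 2 = 1 - cos x ^ 2 := hsin1 x
    have h1 := hpos1 x
    have h2 := hpos2 x
    have h3 : (0:ℝ) < 1 + 3 * cos x ^ 2 := by positivity
    have h4 : (0:ℝ) < a ^ 2 + (1 - a ^ 2) * cos x ^ 2 := by
      nlinarith [sq_nonneg (cos x), mul_nonneg (mul_nonneg (sub_nonneg.mpr ha1.le)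
        (by linarith : (0:ℝ) ≤ 1 + a)) (sq_nonneg (cos x))]
    have hBA1 : (0:ℝ) < (1 + cos x ^ 2) ^ 2 + (sin x * cos x) ^ 2 :=
      add_pos_of_pos_of_nonneg (pow_pos h1 2) (sq_nonneg _)
    have hBA2 : (0:ℝ) < (cos x ^ 2 + a * sin x ^ 2) ^ 2 + ((a - 1) * (sin x * cos x)) ^ 2 :=
      add_pos_of_pos_of_nonneg (pow_pos h2 2) (sq_nonneg _)
    have e1 : 1 / (1 + (sin x * cos x / (1 + cos x ^ 2)) ^ 2) *
        (((cos x ^ 2 - sin x ^ 2) * (1 + cos x ^ 2) + 2 * (sin x ^ 2 * cos x ^ 2)) /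
          (1 + cos x ^ 2) ^ 2) = (3 * cos x ^ 2 - 1) / (1 + 3 * cos x ^ 2) := by
      rw [aux_div _ _ _ (ne_of_gt h1) (ne_of_gt hBA1)]
      rw [div_eq_div_iff (ne_of_gt hBA1) (ne_of_gt h3), mul_pow]
      rw [hs1]
      ring
    have e2 : 1 / (1 + ((a - 1) * (sin x * cos x) / (cos x ^ 2 + a * sin x ^ 2)) ^ 2) *
        (((a - 1) * (cos x ^ 2 - sin x ^ 2) * (cos x ^ 2 + a * sin x ^ 2)
          - 2 * (a - 1) ^ 2 * (sin x ^ 2 * cos x ^ 2)) / (cos x ^ 2 + a * sin x ^ 2) ^ 2) =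
        (a - 1) * ((1 + a) * cos x ^ 2 - a) / (a ^ 2 + (1 - a ^ 2) * cos x ^ 2) := by
      rw [aux_div _ _ _ (ne_of_gt h2) (ne_of_gt hBA2)]
      rw [div_eq_div_iff (ne_of_gt hBA2) (ne_of_gt h4), mul_pow, mul_pow]
      rw [hs1]
      ring
    rw [e1, e2]
    have hDpos : (0:ℝ) < (p - 1) + (4 * p - 2) * cos x ^ 2 + (3 * p + 3) * cos x ^ 4 := by
      nlinarith [sq_nonneg (cos x), sq_nonneg (cos x ^ 2)]
    have hL : 1 / (1 + cos x ^ 2 * Fp p x) =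
        (4 * cos x ^ 2 + (p - 1) * (1 - cos x ^ 2)) /
          ((p - 1) + (4 * p - 2) * cos x ^ 2 + (3 * p + 3) * cos x ^ 4) := by
      have hB := hFden x
      rw [hsin1 x] at hB
      have hstep : 1 + cos x ^ 2 * Fp p x =
          ((p - 1) + (4 * p - 2) * cos x ^ 2 + (3 * p + 3) * cos x ^ 4) /
            (4 * cos x ^ 2 + (p - 1) * (1 - cos x ^ 2)) := by
        rw [Fp, hs1]
        rw [eq_div_iff (ne_of_gt hB)]
        simp only [mul_div_assoc', add_mul, one_mul, div_mul_cancel₀ _ (ne_of_gt hB)]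
        ring
      rw [hstep, one_div_div]
    rw [hL]
    rw [hP] at hDpos ⊢
    have h6 : (0:ℝ) ≤ 6 - 6 * a ^ 2 := by nlinarith
    have hD2 : (0:ℝ) < 2 * a ^ 2 + (2 + 4 * a ^ 2) * cos x ^ 2 + (6 - 6 * a ^ 2) * cos x ^ 4 := by
      nlinarith [sq_nonneg (cos x), mul_nonneg h6 (sq_nonneg (cos x ^ 2)),
        mul_nonneg (by positivity : (0:ℝ) ≤ 2 + 4 * a ^ 2) (sq_nonneg (cos x)), sq_nonneg a,
        pow_pos ha0 2]
    have hL2 : (4 * cos x ^ 2 + (1 / (1 - 2 * a ^ 2) - 1) * (1 - cos x ^ 2)) /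
          (1 / (1 - 2 * a ^ 2) - 1 + (4 * (1 / (1 - 2 * a ^ 2)) - 2) * cos x ^ 2 +
            (3 * (1 / (1 - 2 * a ^ 2)) + 3) * cos x ^ 4) =
        (4 * (1 - 2 * a ^ 2) * cos x ^ 2 + 2 * a ^ 2 * (1 - cos x ^ 2)) /
          (2 * a ^ 2 + (2 + 4 * a ^ 2) * cos x ^ 2 + (6 - 6 * a ^ 2) * cos x ^ 4) := by
      rw [div_eq_div_iff (ne_of_gt hDpos) (ne_of_gt hD2)]
      field_simp
      ring
    rw [hL2]
    rw [div_eq_iff (ne_of_gt hD2)]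
    rw [mul_div_assoc', sub_div' (ne_of_gt h3), div_sub_div _ _ (ne_of_gt h3) (ne_of_gt h4), div_mul_eq_mul_div, eq_div_iff (mul_ne_zero (ne_of_gt h3) (ne_of_gt h4))]
    ring
  have hcont : Continuous fun σ : ℝ => 1 / (1 + cos σ ^ 2 * Fp p σ) := by
    apply Continuous.div continuous_const
    · apply Continuous.add continuous_const
      apply Continuous.mul (by fun_prop)
      exact Continuous.div (by fun_prop) (by fun_prop) (fun x => ne_of_gt (hFden x))
    · exact fun x => ne_of_gt (hD x)
  have hint := intervalIntegral.integral_eq_sub_of_hasDerivAt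
    (fun x _ => hderiv x) (hcont.intervalIntegrable 0 (π / 2))
  rw [hint]
  rw [hHdef]
  simp only [Real.sin_zero, Real.cos_zero, Real.sin_pi_div_two, Real.cos_pi_div_two]
  norm_num [Real.arctan_zero]
  ring
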